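/- Let γ ∈ (−1,0) ∪ (0,1). Then the function F_{1,γ} satisfies: (i) for every t ∈ (0,∞) with t ≠ 1, F_{1,γ} is differentiable at t with F_{1,γ}'(t) = −[(1+t²)(|1−t|^γ − (1+t)^γ) + γ t (|1−t|^γ + (1+t)^γ)]/(γ(2+γ) t²); (ii) F_{1,γ}'(1/t) = t^{2−γ} F_{1,γ}'(t) for all t ∈ (0,∞) with t ≠ 1; (iii) lim_{t→0+} F_{1,γ}(t) = 0 and lim_{t→0+} F_{1,γ}'(t) = 0; (iv) lim_{t→+∞} F_{1,γ}(t) = 2/(1+γ); (v) lim_{t→0+} F_{1,γ}'(t)/t = 2(2−γ)/3; (vi) F_{1,γ}'(t) > 0 for every t ∈ (0,∞) with t ≠ 1. -/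

import Mathlib

open Real Set Filter Topology

noncomputable section

namespace GSQGaux

/-- The auxiliary function
`F_{1,γ}(t) = [2γ(2+γ)t - (1+γ-t)(1+t)(1+t)^γ + (1-t)(1+γ+t)|1-t|^γ] / (γ(1+γ)(2+γ)t)`. -/
def F1 (γ t : ℝ) : ℝ :=
  (2*γ*(2+γ)*t - (1+γ-t)*(1+t)*(1+t)^γ + (1-t)*(1+γ+t)*|1-t|^γ) /
    (γ*(1+γ)*(2+γ)*t)

/-- The explicit formula for the derivative of `F_{1,γ}`:
`F_{1,γ}'(t) = -[(1+t²)(|1-t|^γ - (1+t)^γ) + γt(|1-t|^γ + (1+t)^γ)] / (γ(2+γ)t²)`. -/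
def F1d (γ t : ℝ) : ℝ :=
  -(((1+t^2)*(|1-t|^γ - (1+t)^γ) + γ*t*(|1-t|^γ + (1+t)^γ)) / (γ*(2+γ)*t^2))

lemma hasDerivAt_term1 (γ : ℝ) {t : ℝ} (ht : -1 < t) :
    HasDerivAt (fun x => (1+γ-x)*(1+x)*(1+x)^γ) ((2+γ)*(γ-t)*(1+t)^γ) t := by
  have h0 : (0:ℝ) < 1 + t := by linarith
  have hp : HasDerivAt (fun x : ℝ => (1+x)^γ) (1 * γ * (1+t)^(γ-1)) t :=
    ((hasDerivAt_id t).const_add 1).rpow_const (Or.inl h0.ne')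
  have h1 : HasDerivAt (fun x : ℝ => (1+γ-x)*(1+x)) ((-1)*(1+t) + (1+γ-t)*1) t :=
    ((hasDerivAt_id t).const_sub (1+γ)).mul ((hasDerivAt_id t).const_add 1)
  have := h1.mul hp
  refine this.congr_deriv ?_
  rw [Real.rpow_sub_one h0.ne']
  field_simp
  ring

lemma hasDerivAt_term2_lt (γ : ℝ) {t : ℝ} (ht : t < 1) :
    HasDerivAt (fun x => (1-x)*(1+γ+x)*(1-x)^γ) (-((2+γ)*(γ+t)*(1-t)^γ)) t := by
  have h0 : (0:ℝ) < 1 - t := by linarith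
  have hp : HasDerivAt (fun x : ℝ => (1-x)^γ) ((-1) * γ * (1-t)^(γ-1)) t :=
    ((hasDerivAt_id t).const_sub 1).rpow_const (Or.inl h0.ne')
  have h1 : HasDerivAt (fun x : ℝ => (1-x)*(1+γ+x)) ((-1)*(1+γ+t) + (1-t)*1) t :=
    ((hasDerivAt_id t).const_sub 1).mul ((hasDerivAt_id t).const_add (1+γ))
  have := h1.mul hp
  refine this.congr_deriv ?_
  rw [Real.rpow_sub_one h0.ne']
  field_simp
  ring

lemma hasDerivAt_term2_gt (γ : ℝ) {t : ℝ} (ht : 1 < t) :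
    HasDerivAt (fun x => (1-x)*(1+γ+x)*(x-1)^γ) (-((2+γ)*(γ+t)*(t-1)^γ)) t := by
  have h0 : (0:ℝ) < t - 1 := by linarith
  have hp : HasDerivAt (fun x : ℝ => (x-1)^γ) (1 * γ * (t-1)^(γ-1)) t :=
    ((hasDerivAt_id t).sub_const 1).rpow_const (Or.inl h0.ne')
  have h1 : HasDerivAt (fun x : ℝ => (1-x)*(1+γ+x)) ((-1)*(1+γ+t) + (1-t)*1) t :=
    ((hasDerivAt_id t).const_sub 1).mul ((hasDerivAt_id t).const_add (1+γ))
  have := h1.mul hp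
  refine this.congr_deriv ?_
  rw [Real.rpow_sub_one h0.ne']
  field_simp
  ring

lemma hasDerivAt_term2 (γ : ℝ) {t : ℝ} (ht : t ≠ 1) :
    HasDerivAt (fun x => (1-x)*(1+γ+x)*|1-x|^γ) (-((2+γ)*(γ+t)*|1-t|^γ)) t := by
  rcases lt_or_gt_of_ne ht with h|h
  · rw [abs_of_pos (by linarith : (0:ℝ) < 1 - t)]
    apply (hasDerivAt_term2_lt γ h).congr_of_eventuallyEq
    filter_upwards [isOpen_Iio.eventually_mem (show t ∈ Iio (1:ℝ) from h)] with x hx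
    rw [abs_of_pos (by simpa using hx : (0:ℝ) < 1 - x)]
  · rw [show |1-t| = t - 1 by rw [abs_sub_comm]; exact abs_of_pos (by linarith)]
    apply (hasDerivAt_term2_gt γ h).congr_of_eventuallyEq
    filter_upwards [isOpen_Ioi.eventually_mem (show t ∈ Ioi (1:ℝ) from h)] with x hx
    rw [show |1-x| = x - 1 by rw [abs_sub_comm]; exact abs_of_pos (by simpa using hx)]

lemma hasDerivAt_Nf (γ : ℝ) {t : ℝ} (ht : -1 < t) (ht1 : t ≠ 1) :
    HasDerivAt (fun x => 2*γ*(2+γ)*x - (1+γ-x)*(1+x)*(1+x)^γ + (1-x)*(1+γ+x)*|1-x|^γ)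
      (2*γ*(2+γ)*1 - (2+γ)*(γ-t)*(1+t)^γ + -((2+γ)*(γ+t)*|1-t|^γ)) t :=
  (((hasDerivAt_id t).const_mul (2*γ*(2+γ))).sub (hasDerivAt_term1 γ ht)).add
    (hasDerivAt_term2 γ ht1)

lemma part1 {γ : ℝ} (hγm : -1 < γ) (hγ1 : γ < 1) (hγ0 : γ ≠ 0) {t : ℝ} (ht : 0 < t)
    (ht1 : t ≠ 1) : HasDerivAt (F1 γ) (F1d γ t) t := by
  have h1γ : 1 + γ ≠ 0 := by linarith
  have h2γ : 2 + γ ≠ 0 := by linarith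
  have hD : HasDerivAt (fun x : ℝ => γ*(1+γ)*(2+γ)*x) (γ*(1+γ)*(2+γ)*1) t :=
    (hasDerivAt_id t).const_mul _
  have hDne : γ*(1+γ)*(2+γ)*t ≠ 0 := by
    exact mul_ne_zero (mul_ne_zero (mul_ne_zero hγ0 h1γ) h2γ) ht.ne'
  have key := (hasDerivAt_Nf γ (by linarith) ht1).div hD hDne
  have hF : F1 γ = fun x => (2*γ*(2+γ)*x - (1+γ-x)*(1+x)*(1+x)^γ + (1-x)*(1+γ+x)*|1-x|^γ) /
      (γ*(1+γ)*(2+γ)*x) := rfl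
  rw [hF]
  refine key.congr_deriv ?_
  rw [F1d]
  set P := (1+t)^γ
  set Q := |1-t|^γ
  field_simp
  ring

lemma part2 {γ : ℝ} (hγ0 : γ ≠ 0) (h2γ : 2+γ ≠ 0) {t : ℝ} (ht : 0 < t) :
    F1d γ (1/t) = t^(2-γ) * F1d γ t := by
  simp only [F1d]
  have h1 : |1 - 1/t| ^ γ = |1-t|^γ / t^γ := by
    rw [show (1:ℝ) - 1/t = (t-1)/t by field_simp, abs_div, abs_of_pos ht, abs_sub_comm,
      Real.div_rpow (abs_nonneg _) ht.le]
  have h2 : (1 + 1/t) ^ γ = (1+t)^γ / t^γ := by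
    rw [show (1:ℝ)+1/t = (1+t)/t by field_simp; ring, Real.div_rpow (by positivity) ht.le]
  have h3 : t ^ (2-γ) = t^2 / t^γ := by
    rw [Real.rpow_sub ht, Real.rpow_two]
  rw [h1, h2, h3]
  have htγ : t^γ ≠ 0 := (Real.rpow_pos_of_pos ht γ).ne'
  field_simp
  ring

lemma part3a {γ : ℝ} (hγm : -1 < γ) (hγ0 : γ ≠ 0) :
    Tendsto (F1 γ) (𝓝[>] (0:ℝ)) (𝓝 0) := by
  have hN : HasDerivAt (fun x => 2*γ*(2+γ)*x - (1+γ-x)*(1+x)*(1+x)^γ + (1-x)*(1+γ+x)*|1-x|^γ)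
      0 0 := by
    convert hasDerivAt_Nf γ (t := 0) (by norm_num) (by norm_num) using 1
    norm_num [Real.one_rpow]
    ring
  rw [hasDerivAt_iff_tendsto_slope] at hN
  have hmono : 𝓝[Ioi (0:ℝ)] 0 ≤ 𝓝[≠] (0:ℝ) :=
    nhdsWithin_mono 0 (fun x hx => ne_of_gt hx)
  have hc := (hN.mono_left hmono).div_const (γ*(1+γ)*(2+γ))
  rw [zero_div] at hc
  apply hc.congr'
  filter_upwards [self_mem_nhdsWithin] with x hx
  have hx0 : (x:ℝ) ≠ 0 := ne_of_gt hx
  rw [slope_def_field, F1]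
  have hN0 : 2*γ*(2+γ)*(0:ℝ) - (1+γ-0)*(1+0)*(1+0)^γ + (1-0)*(1+γ+0)*|1-0|^γ = 0 := by
    norm_num [Real.one_rpow]
  rw [hN0, sub_zero, sub_zero, div_div, mul_comm x (γ*(1+γ)*(2+γ))]

lemma hasDerivAt_f (γ : ℝ) {t : ℝ} (ht : -1 < t) (ht1 : t < 1) :
    HasDerivAt (fun x => (1+x^2-γ*x)*(1+x)^γ - (1+x^2+γ*x)*(1-x)^γ)
      ((2+γ)*t*((t+1-γ)*(1+t)^(γ-1) + (t-1+γ)*(1-t)^(γ-1))) t := by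
  have h0 : (0:ℝ) < 1 + t := by linarith
  have h1 : (0:ℝ) < 1 - t := by linarith
  have hp : HasDerivAt (fun x : ℝ => (1+x)^γ) (1 * γ * (1+t)^(γ-1)) t :=
    ((hasDerivAt_id t).const_add 1).rpow_const (Or.inl h0.ne')
  have hq : HasDerivAt (fun x : ℝ => (1-x)^γ) ((-1) * γ * (1-t)^(γ-1)) t :=
    ((hasDerivAt_id t).const_sub 1).rpow_const (Or.inl h1.ne')
  have hu : HasDerivAt (fun x : ℝ => 1+x^2-γ*x) ((2:ℕ)*t^1 - γ*1) t :=
    (((hasDerivAt_pow 2 t).const_add 1)).sub ((hasDerivAt_id t).const_mul γ)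
  have hv : HasDerivAt (fun x : ℝ => 1+x^2+γ*x) ((2:ℕ)*t^1 + γ*1) t :=
    (((hasDerivAt_pow 2 t).const_add 1)).add ((hasDerivAt_id t).const_mul γ)
  have := (hu.mul hp).sub (hv.mul hq)
  refine this.congr_deriv ?_
  rw [Real.rpow_sub_one h0.ne', Real.rpow_sub_one h1.ne']
  field_simp
  ring

lemma hasDerivAt_h0 (γ : ℝ) :
    HasDerivAt (fun x => (x+1-γ)*(1+x)^(γ-1) + (x-1+γ)*(1-x)^(γ-1)) (2 - 2*(γ-1)^2) 0 := by
  have hp : HasDerivAt (fun x : ℝ => (1+x)^(γ-1)) (1 * (γ-1) * (1+(0:ℝ))^(γ-1-1)) 0 :=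
    ((hasDerivAt_id 0).const_add 1).rpow_const (Or.inl (by norm_num))
  have hq : HasDerivAt (fun x : ℝ => (1-x)^(γ-1)) ((-1) * (γ-1) * (1-(0:ℝ))^(γ-1-1)) 0 :=
    ((hasDerivAt_id 0).const_sub 1).rpow_const (Or.inl (by norm_num))
  have ha : HasDerivAt (fun x : ℝ => x+1-γ) 1 0 :=
    ((hasDerivAt_id 0).add_const 1).sub_const γ
  have hb : HasDerivAt (fun x : ℝ => x-1+γ) 1 0 :=
    ((hasDerivAt_id 0).sub_const 1).add_const γ
  have := (ha.mul hp).add (hb.mul hq)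
  refine this.congr_deriv ?_
  norm_num [Real.one_rpow]
  ring

lemma part3b {γ : ℝ} (hγm : -1 < γ) (hγ1 : γ < 1) (hγ0 : γ ≠ 0) :
    Tendsto (F1d γ) (𝓝[>] (0:ℝ)) (𝓝 0) := by
  have h2γ : (2:ℝ)+γ ≠ 0 := by linarith
  have hmem : Ioo (0:ℝ) 1 ∈ 𝓝[>] (0:ℝ) := Ioo_mem_nhdsGT_of_mem ⟨le_refl _, one_pos⟩
  set f := fun x : ℝ => (1+x^2-γ*x)*(1+x)^γ - (1+x^2+γ*x)*(1-x)^γ with hf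
  set g := fun x : ℝ => γ*(2+γ)*x^2 with hg
  have hff' : ∀ᶠ x in 𝓝[>] (0:ℝ),
      HasDerivAt f ((2+γ)*x*((x+1-γ)*(1+x)^(γ-1) + (x-1+γ)*(1-x)^(γ-1))) x := by
    filter_upwards [hmem] with x hx
    exact hasDerivAt_f γ (by linarith [hx.1]) hx.2
  have hgat : ∀ x : ℝ, HasDerivAt g (γ*(2+γ)*(2*x)) x := by
    intro x
    have := (hasDerivAt_pow 2 x).const_mul (γ*(2+γ))
    refine this.congr_deriv ?_
    push_cast; ring
  have hgg' : ∀ᶠ x in 𝓝[>] (0:ℝ), HasDerivAt g (γ*(2+γ)*(2*x)) x :=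
    Eventually.of_forall hgat
  have hg' : ∀ᶠ x in 𝓝[>] (0:ℝ), γ*(2+γ)*(2*x) ≠ 0 := by
    filter_upwards [self_mem_nhdsWithin] with x hx
    have : (x:ℝ) ≠ 0 := ne_of_gt hx
    positivity
  have hf0 : Tendsto f (𝓝[>] (0:ℝ)) (𝓝 0) := by
    have hc : ContinuousAt f 0 := (hasDerivAt_f γ (by norm_num) (by norm_num)).continuousAt
    have hfz : f 0 = 0 := by simp [hf, Real.one_rpow]
    have h' : Tendsto f (𝓝[>] (0:ℝ)) (𝓝 (f 0)) := hc.continuousWithinAt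
    rwa [hfz] at h'
  have hg0 : Tendsto g (𝓝[>] (0:ℝ)) (𝓝 0) := by
    have hc : ContinuousAt g 0 := by fun_prop
    have hgz : g 0 = 0 := by simp [hg]
    have h' : Tendsto g (𝓝[>] (0:ℝ)) (𝓝 (g 0)) := hc.continuousWithinAt
    rwa [hgz] at h'
  have hdiv : Tendsto (fun x => ((2+γ)*x*((x+1-γ)*(1+x)^(γ-1) + (x-1+γ)*(1-x)^(γ-1))) /
      (γ*(2+γ)*(2*x))) (𝓝[>] (0:ℝ)) (𝓝 0) := by
    have hc : ContinuousAt (fun x : ℝ => (x+1-γ)*(1+x)^(γ-1) + (x-1+γ)*(1-x)^(γ-1)) 0 :=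
      (hasDerivAt_h0 γ).continuousAt
    have hval : ((0:ℝ)+1-γ)*(1+(0:ℝ))^(γ-1) + ((0:ℝ)-1+γ)*(1-(0:ℝ))^(γ-1) = 0 := by
      norm_num [Real.one_rpow]
    have hcw : Tendsto (fun x : ℝ => (x+1-γ)*(1+x)^(γ-1) + (x-1+γ)*(1-x)^(γ-1)) (𝓝[>] (0:ℝ))
        (𝓝 (((0:ℝ)+1-γ)*(1+(0:ℝ))^(γ-1) + ((0:ℝ)-1+γ)*(1-(0:ℝ))^(γ-1))) := hc.continuousWithinAt
    have hh := hcw.div_const (2*γ)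
    rw [hval, zero_div] at hh
    apply hh.congr'
    filter_upwards [self_mem_nhdsWithin] with x hx
    have hx0 : (x:ℝ) ≠ 0 := ne_of_gt hx
    field_simp
  have main := HasDerivAt.lhopital_zero_nhdsGT hff' hgg' hg' hf0 hg0 hdiv
  apply main.congr'
  filter_upwards [hmem] with x hx
  have hx0 : (x:ℝ) ≠ 0 := ne_of_gt hx.1
  rw [F1d, abs_of_pos (by linarith [hx.2] : (0:ℝ) < 1 - x)]
  simp only [hf, hg]
  field_simp
  ring

lemma part5 {γ : ℝ} (hγm : -1 < γ) (hγ1 : γ < 1) (hγ0 : γ ≠ 0) :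
    Tendsto (fun t => F1d γ t / t) (𝓝[>] (0:ℝ)) (𝓝 (2*(2-γ)/3)) := by
  have h2γ : (2:ℝ)+γ ≠ 0 := by linarith
  have hmem : Ioo (0:ℝ) 1 ∈ 𝓝[>] (0:ℝ) := Ioo_mem_nhdsGT_of_mem ⟨le_refl _, one_pos⟩
  set f := fun x : ℝ => (1+x^2-γ*x)*(1+x)^γ - (1+x^2+γ*x)*(1-x)^γ with hf
  set g := fun x : ℝ => γ*(2+γ)*x^3 with hg
  have hff' : ∀ᶠ x in 𝓝[>] (0:ℝ),
      HasDerivAt f ((2+γ)*x*((x+1-γ)*(1+x)^(γ-1) + (x-1+γ)*(1-x)^(γ-1))) x := by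
    filter_upwards [hmem] with x hx
    exact hasDerivAt_f γ (by linarith [hx.1]) hx.2
  have hgat : ∀ x : ℝ, HasDerivAt g (γ*(2+γ)*(3*x^2)) x := by
    intro x
    have h3 : HasDerivAt (fun x : ℝ => x^3) (3*x^2) x := by
      simpa using hasDerivAt_pow 3 x
    exact h3.const_mul _
  have hgg' : ∀ᶠ x in 𝓝[>] (0:ℝ), HasDerivAt g (γ*(2+γ)*(3*x^2)) x :=
    Eventually.of_forall hgat
  have hg' : ∀ᶠ x in 𝓝[>] (0:ℝ), γ*(2+γ)*(3*x^2) ≠ 0 := by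
    filter_upwards [self_mem_nhdsWithin] with x hx
    have : (x:ℝ) ≠ 0 := ne_of_gt hx
    positivity
  have hf0 : Tendsto f (𝓝[>] (0:ℝ)) (𝓝 0) := by
    have hc : ContinuousAt f 0 := (hasDerivAt_f γ (by norm_num) (by norm_num)).continuousAt
    have hfz : f 0 = 0 := by simp [hf, Real.one_rpow]
    have h' : Tendsto f (𝓝[>] (0:ℝ)) (𝓝 (f 0)) := hc.continuousWithinAt
    rwa [hfz] at h'
  have hg0 : Tendsto g (𝓝[>] (0:ℝ)) (𝓝 0) := by
    have hc : ContinuousAt g 0 := by fun_prop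
    have hgz : g 0 = 0 := by simp [hg]
    have h' : Tendsto g (𝓝[>] (0:ℝ)) (𝓝 (g 0)) := hc.continuousWithinAt
    rwa [hgz] at h'
  have hslope := hasDerivAt_iff_tendsto_slope.mp (hasDerivAt_h0 γ)
  have hmono : 𝓝[Ioi (0:ℝ)] 0 ≤ 𝓝[≠] (0:ℝ) :=
    nhdsWithin_mono 0 (fun x hx => ne_of_gt hx)
  have hdiv : Tendsto (fun x => ((2+γ)*x*((x+1-γ)*(1+x)^(γ-1) + (x-1+γ)*(1-x)^(γ-1))) /
      (γ*(2+γ)*(3*x^2))) (𝓝[>] (0:ℝ)) (𝓝 (2*(2-γ)/3)) := by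
    have hh := (hslope.mono_left hmono).div_const (3*γ)
    have hval : (2 - 2*(γ-1)^2) / (3*γ) = 2*(2-γ)/3 := by
      field_simp
      ring
    rw [hval] at hh
    apply hh.congr'
    filter_upwards [self_mem_nhdsWithin] with x hx
    have hx0 : (x:ℝ) ≠ 0 := ne_of_gt hx
    rw [slope_def_field]
    have hz : ((0:ℝ)+1-γ)*(1+(0:ℝ))^(γ-1) + ((0:ℝ)-1+γ)*(1-(0:ℝ))^(γ-1) = 0 := by
      norm_num [Real.one_rpow]
    rw [hz]
    field_simp
    ring
  have main := HasDerivAt.lhopital_zero_nhdsGT hff' hgg' hg' hf0 hg0 hdiv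
  apply main.congr'
  filter_upwards [hmem] with x hx
  have hx0 : (x:ℝ) ≠ 0 := ne_of_gt hx.1
  rw [F1d, abs_of_pos (by linarith [hx.2] : (0:ℝ) < 1 - x)]
  simp only [hf, hg]
  field_simp
  ring

lemma hasDerivAt_W (γ : ℝ) {s : ℝ} (h0 : -1 < s) (h1 : s < 1) :
    HasDerivAt (fun x => (1-(1+γ)*x)*(1+x)^(1+γ) - (1+(1+γ)*x)*(1-x)^(1+γ))
      (-((1+γ)*(2+γ)*s*((1+s)^γ - (1-s)^γ))) s := by
  have hp0 : (0:ℝ) < 1 + s := by linarith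
  have hq0 : (0:ℝ) < 1 - s := by linarith
  have hp : HasDerivAt (fun x : ℝ => (1+x)^(1+γ)) (1*(1+γ)*(1+s)^(1+γ-1)) s :=
    ((hasDerivAt_id s).const_add 1).rpow_const (Or.inl hp0.ne')
  have hq : HasDerivAt (fun x : ℝ => (1-x)^(1+γ)) ((-1)*(1+γ)*(1-s)^(1+γ-1)) s :=
    ((hasDerivAt_id s).const_sub 1).rpow_const (Or.inl hq0.ne')
  have ha : HasDerivAt (fun x : ℝ => 1-(1+γ)*x) (-((1+γ)*1)) s :=
    (((hasDerivAt_id s).const_mul (1+γ))).const_sub 1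
  have hb : HasDerivAt (fun x : ℝ => 1+(1+γ)*x) ((1+γ)*1) s :=
    (((hasDerivAt_id s).const_mul (1+γ))).const_add 1
  have := (ha.mul hp).sub (hb.mul hq)
  refine this.congr_deriv ?_
  rw [show (1+γ-1:ℝ) = γ by ring]
  have e1 : (1+s)^((1:ℝ)+γ) = (1+s)*(1+s)^γ := by
    rw [Real.rpow_add hp0, Real.rpow_one]
  have e2 : (1-s)^((1:ℝ)+γ) = (1-s)*(1-s)^γ := by
    rw [Real.rpow_add hq0, Real.rpow_one]
  rw [e1, e2]
  ring

lemma part4 {γ : ℝ} (hγm : -1 < γ) (hγ1 : γ < 1) (hγ0 : γ ≠ 0) :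
    Tendsto (F1 γ) atTop (𝓝 (2/(1+γ))) := by
  have h1γ : (0:ℝ) < 1 + γ := by linarith
  have h2γ : (0:ℝ) < 2 + γ := by linarith
  have hmem : Ioo (0:ℝ) 1 ∈ 𝓝[>] (0:ℝ) := Ioo_mem_nhdsGT_of_mem ⟨le_refl _, one_pos⟩
  set W := fun x : ℝ => (1-(1+γ)*x)*(1+x)^(1+γ) - (1+(1+γ)*x)*(1-x)^(1+γ) with hWdef
  -- W x / x^2 → 0
  have hff' : ∀ᶠ x in 𝓝[>] (0:ℝ),
      HasDerivAt W (-((1+γ)*(2+γ)*x*((1+x)^γ - (1-x)^γ))) x := by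
    filter_upwards [hmem] with x hx
    exact hasDerivAt_W γ (by linarith [hx.1]) hx.2
  have hgat : ∀ x : ℝ, HasDerivAt (fun x : ℝ => x^2) (2*x) x := by
    intro x; simpa using hasDerivAt_pow 2 x
  have hgg' : ∀ᶠ x in 𝓝[>] (0:ℝ), HasDerivAt (fun x : ℝ => x^2) (2*x) x :=
    Eventually.of_forall hgat
  have hg' : ∀ᶠ x in 𝓝[>] (0:ℝ), 2*x ≠ (0:ℝ) := by
    filter_upwards [self_mem_nhdsWithin] with x hx
    have : (x:ℝ) ≠ 0 := ne_of_gt hx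
    positivity
  have hf0 : Tendsto W (𝓝[>] (0:ℝ)) (𝓝 0) := by
    have hc : ContinuousAt W 0 := (hasDerivAt_W γ (by norm_num) (by norm_num)).continuousAt
    have hfz : W 0 = 0 := by simp [hWdef, Real.one_rpow]
    have h' : Tendsto W (𝓝[>] (0:ℝ)) (𝓝 (W 0)) := hc.continuousWithinAt
    rwa [hfz] at h'
  have hg0 : Tendsto (fun x : ℝ => x^2) (𝓝[>] (0:ℝ)) (𝓝 0) := by
    have hc : ContinuousAt (fun x : ℝ => x^2) 0 := by fun_prop
    have h' : Tendsto (fun x : ℝ => x^2) (𝓝[>] (0:ℝ)) (𝓝 ((0:ℝ)^2)) := hc.continuousWithinAt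
    simpa using h'
  have hcp : ContinuousAt (fun x : ℝ => (1+x)^γ) 0 :=
    (((hasDerivAt_id (0:ℝ)).const_add 1).rpow_const (Or.inl (by norm_num))).continuousAt
  have hcq : ContinuousAt (fun x : ℝ => (1-x)^γ) 0 :=
    (((hasDerivAt_id (0:ℝ)).const_sub 1).rpow_const (Or.inl (by norm_num))).continuousAt
  have hdiv : Tendsto (fun x => (-((1+γ)*(2+γ)*x*((1+x)^γ - (1-x)^γ))) / (2*x))
      (𝓝[>] (0:ℝ)) (𝓝 0) := by
    have hk : ContinuousAt (fun x : ℝ => -((1+γ)*(2+γ)*((1+x)^γ - (1-x)^γ))/2) 0 := by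
      exact (((hcp.sub hcq).const_mul ((1+γ)*(2+γ))).neg).div_const 2
    have hkz : -((1+γ)*(2+γ)*((1+(0:ℝ))^γ - (1-(0:ℝ))^γ))/2 = 0 := by
      norm_num [Real.one_rpow]
    have h' : Tendsto (fun x : ℝ => -((1+γ)*(2+γ)*((1+x)^γ - (1-x)^γ))/2) (𝓝[>] (0:ℝ))
        (𝓝 (-((1+γ)*(2+γ)*((1+(0:ℝ))^γ - (1-(0:ℝ))^γ))/2)) := hk.continuousWithinAt
    rw [hkz] at h'
    apply h'.congr'
    filter_upwards [self_mem_nhdsWithin] with x hx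
    have hx0 : (x:ℝ) ≠ 0 := ne_of_gt hx
    field_simp
  have hW2 : Tendsto (fun x => W x / x^2) (𝓝[>] (0:ℝ)) (𝓝 0) :=
    HasDerivAt.lhopital_zero_nhdsGT hff' hgg' hg' hf0 hg0 hdiv
  have hpow : Tendsto (fun x : ℝ => x^(1-γ)) (𝓝[>] (0:ℝ)) (𝓝 0) := by
    have hc : ContinuousAt (fun x : ℝ => x^(1-γ)) 0 :=
      Real.continuousAt_rpow_const 0 (1-γ) (Or.inr (by linarith))
    have h' : Tendsto (fun x : ℝ => x^(1-γ)) (𝓝[>] (0:ℝ)) (𝓝 ((0:ℝ)^(1-γ))) :=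
      hc.continuousWithinAt
    rwa [Real.zero_rpow (by intro h; linarith [h] : (1:ℝ)-γ ≠ 0)] at h'
  have hWg : Tendsto (fun x => W x / x^(1+γ)) (𝓝[>] (0:ℝ)) (𝓝 0) := by
    have hmul := hW2.mul hpow
    rw [mul_zero] at hmul
    apply hmul.congr'
    filter_upwards [self_mem_nhdsWithin] with x hx
    have hx0 : (0:ℝ) < x := hx
    have h2 : x^((1:ℝ)+γ) ≠ 0 := (Real.rpow_pos_of_pos hx0 _).ne'
    have h3 : x^((1:ℝ)-γ) ≠ 0 := (Real.rpow_pos_of_pos hx0 _).ne'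
    have e : x^((1:ℝ)-γ) * x^((1:ℝ)+γ) = x^2 := by
      rw [← Real.rpow_add hx0, show (1-γ+(1+γ):ℝ) = 2 by ring, Real.rpow_two]
    rw [div_mul_eq_mul_div, div_eq_div_iff (by positivity) h2, mul_assoc, e]
  have hval : (2*γ*(2+γ) + 0) / (γ*(1+γ)*(2+γ)) = 2/(1+γ) := by
    rw [add_zero]
    field_simp
  have hE : Tendsto (fun s => (2*γ*(2+γ) + W s/s^(1+γ))/(γ*(1+γ)*(2+γ))) (𝓝[>] (0:ℝ))
      (𝓝 (2/(1+γ))) := by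
    have hadd : Tendsto (fun s : ℝ => 2*γ*(2+γ) + W s/s^(1+γ)) (𝓝[>] (0:ℝ))
        (𝓝 (2*γ*(2+γ) + 0)) := tendsto_const_nhds.add hWg
    have := hadd.div_const (γ*(1+γ)*(2+γ))
    rwa [hval] at this
  have hcomp := hE.comp tendsto_inv_atTop_nhdsGT_zero
  apply hcomp.congr'
  filter_upwards [eventually_gt_atTop (1:ℝ)] with t ht
  have ht0 : (0:ℝ) < t := by linarith
  have ht1 : (0:ℝ) < t - 1 := by linarith
  have h1t : (0:ℝ) < 1 + t := by linarith
  have htγ : (0:ℝ) < t^((1:ℝ)+γ) := Real.rpow_pos_of_pos ht0 _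
  show (2*γ*(2+γ) + W t⁻¹/(t⁻¹)^(1+γ))/(γ*(1+γ)*(2+γ)) = F1 γ t
  have e1 : (1+t⁻¹) = (1+t)/t := by field_simp; ring
  have e2 : (1-t⁻¹) = (t-1)/t := by field_simp
  have e3 : (1+t⁻¹)^((1:ℝ)+γ) = (1+t)^((1:ℝ)+γ)/t^((1:ℝ)+γ) := by
    rw [e1, Real.div_rpow h1t.le ht0.le]
  have e4 : (1-t⁻¹)^((1:ℝ)+γ) = (t-1)^((1:ℝ)+γ)/t^((1:ℝ)+γ) := by
    rw [e2, Real.div_rpow ht1.le ht0.le]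
  have e5 : (t⁻¹)^((1:ℝ)+γ) = (t^((1:ℝ)+γ))⁻¹ := Real.inv_rpow ht0.le _
  have e6 : (1+t)^((1:ℝ)+γ) = (1+t)*(1+t)^γ := by
    rw [Real.rpow_add h1t, Real.rpow_one]
  have e7 : (t-1)^((1:ℝ)+γ) = (t-1)*(t-1)^γ := by
    rw [Real.rpow_add ht1, Real.rpow_one]
  have e8 : |1-t| = t-1 := by rw [abs_sub_comm]; exact abs_of_pos ht1
  simp only [hWdef]
  rw [F1, e8, e3, e4, e5, e6, e7]
  have h6 : ((1:ℝ)+γ) ≠ 0 := by linarith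
  field_simp
  ring

lemma eta_deriv (γ : ℝ) {x : ℝ} (hx : 0 < x) :
    HasDerivAt (fun r : ℝ => 2*r^(2-γ) - (2-γ)*r^2 - γ) (2*(2-γ)*(x^(1-γ) - x)) x := by
  have hp : HasDerivAt (fun r : ℝ => r^(2-γ)) ((2-γ)*x^(2-γ-1)) x :=
    Real.hasDerivAt_rpow_const (Or.inl hx.ne')
  have := ((hp.const_mul 2).sub ((hasDerivAt_pow 2 x).const_mul (2-γ))).sub_const γ
  refine this.congr_deriv ?_
  rw [show (2-γ-1:ℝ) = 1-γ by ring]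
  push_cast
  ring

lemma eta_neg {γ : ℝ} (hγ0 : 0 < γ) (hγ1 : γ < 1) {r : ℝ} (hr0 : 0 < r) (hr1 : r < 1) :
    2*r^(2-γ) - (2-γ)*r^2 - γ < 0 := by
  have hcont : ContinuousOn (fun r : ℝ => 2*r^(2-γ) - (2-γ)*r^2 - γ) (Icc r 1) := by
    apply ContinuousOn.sub _ continuousOn_const
    apply ContinuousOn.sub
    · exact continuousOn_const.mul (continuousOn_id.rpow_const
        (fun x hx => Or.inl (ne_of_gt (lt_of_lt_of_le hr0 hx.1))))
    · exact continuousOn_const.mul (continuousOn_id.pow 2)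
  have hd : ∀ x ∈ interior (Icc r 1), 0 < deriv (fun r : ℝ => 2*r^(2-γ) - (2-γ)*r^2 - γ) x := by
    intro x hx
    rw [interior_Icc] at hx
    have hx0 : 0 < x := lt_trans hr0 hx.1
    rw [(eta_deriv γ hx0).deriv]
    have h1 : x^(1:ℝ) < x^(1-γ) :=
      Real.rpow_lt_rpow_of_exponent_gt hx0 hx.2 (by linarith)
    rw [Real.rpow_one] at h1
    nlinarith
  have hmono := strictMonoOn_of_deriv_pos (convex_Icc r 1) hcont hd
  have hlt := hmono (show r ∈ Icc r 1 from ⟨le_refl _, hr1.le⟩)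
    (show (1:ℝ) ∈ Icc r 1 from ⟨hr1.le, le_refl _⟩) hr1
  simp only [Real.one_rpow, one_pow] at hlt
  linarith

lemma eta_pos {γ : ℝ} (hγ0 : γ < 0) (hγm : -1 < γ) {r : ℝ} (hr0 : 0 < r) (hr1 : r < 1) :
    0 < 2*r^(2-γ) - (2-γ)*r^2 - γ := by
  have hcont : ContinuousOn (fun r : ℝ => 2*r^(2-γ) - (2-γ)*r^2 - γ) (Icc r 1) := by
    apply ContinuousOn.sub _ continuousOn_const
    apply ContinuousOn.sub
    · exact continuousOn_const.mul (continuousOn_id.rpow_const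
        (fun x hx => Or.inl (ne_of_gt (lt_of_lt_of_le hr0 hx.1))))
    · exact continuousOn_const.mul (continuousOn_id.pow 2)
  have hd : ∀ x ∈ interior (Icc r 1), deriv (fun r : ℝ => 2*r^(2-γ) - (2-γ)*r^2 - γ) x < 0 := by
    intro x hx
    rw [interior_Icc] at hx
    have hx0 : 0 < x := lt_trans hr0 hx.1
    rw [(eta_deriv γ hx0).deriv]
    have h1 : x^(1-γ) < x^(1:ℝ) :=
      Real.rpow_lt_rpow_of_exponent_gt hx0 hx.2 (by linarith)
    rw [Real.rpow_one] at h1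
    nlinarith
  have hmono := strictAntiOn_of_deriv_neg (convex_Icc r 1) hcont hd
  have hlt := hmono (show r ∈ Icc r 1 from ⟨le_refl _, hr1.le⟩)
    (show (1:ℝ) ∈ Icc r 1 from ⟨hr1.le, le_refl _⟩) hr1
  simp only [Real.one_rpow, one_pow] at hlt
  linarith

lemma phi_deriv (γ : ℝ) {x : ℝ} (hx : 0 < x) :
    HasDerivAt (fun r : ℝ => (2-γ)*(1-r^(2+γ)) - (2+γ)*(r^γ - r^2))
      ((2-γ)*(-((2+γ)*x^(1+γ))) - (2+γ)*(γ*x^(γ-1) - 2*x)) x := by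
  have hp : HasDerivAt (fun r : ℝ => r^(2+γ)) ((2+γ)*x^(2+γ-1)) x :=
    Real.hasDerivAt_rpow_const (Or.inl hx.ne')
  have hq : HasDerivAt (fun r : ℝ => r^γ) (γ*x^(γ-1)) x :=
    Real.hasDerivAt_rpow_const (Or.inl hx.ne')
  have := ((hp.const_sub 1).const_mul (2-γ)).sub ((hq.sub (hasDerivAt_pow 2 x)).const_mul (2+γ))
  refine this.congr_deriv ?_
  rw [show (2+γ-1:ℝ) = 1+γ by ring]
  push_cast
  ring

lemma phi_deriv_eq (γ : ℝ) {x : ℝ} (hx : 0 < x) :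
    (2-γ)*(-((2+γ)*x^(1+γ))) - (2+γ)*(γ*x^(γ-1) - 2*x)
      = (2+γ)*x^(γ-1)*(2*x^(2-γ) - (2-γ)*x^2 - γ) := by
  have hX : (0:ℝ) < x^γ := Real.rpow_pos_of_pos hx γ
  have e1 : x^(γ-1) = x^γ/x := Real.rpow_sub_one hx.ne' γ
  have e2 : x^(1+γ) = x*x^γ := by
    rw [Real.rpow_add hx, Real.rpow_one]
  have e3 : x^(2-γ) = x^2/x^γ := by
    rw [Real.rpow_sub hx, Real.rpow_two]
  rw [e1, e2, e3]
  field_simp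
  ring

lemma phi_pos {γ : ℝ} (hγ0 : 0 < γ) (hγ1 : γ < 1) {r : ℝ} (hr0 : 0 < r) (hr1 : r < 1) :
    0 < (2-γ)*(1-r^(2+γ)) - (2+γ)*(r^γ - r^2) := by
  have hcont : ContinuousOn (fun r : ℝ => (2-γ)*(1-r^(2+γ)) - (2+γ)*(r^γ - r^2)) (Icc r 1) := by
    apply ContinuousOn.sub
    · exact continuousOn_const.mul (continuousOn_const.sub (continuousOn_id.rpow_const
        (fun x hx => Or.inl (ne_of_gt (lt_of_lt_of_le hr0 hx.1)))))
    · exact continuousOn_const.mul ((continuousOn_id.rpow_const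
        (fun x hx => Or.inl (ne_of_gt (lt_of_lt_of_le hr0 hx.1)))).sub (continuousOn_id.pow 2))
  have hd : ∀ x ∈ interior (Icc r 1),
      deriv (fun r : ℝ => (2-γ)*(1-r^(2+γ)) - (2+γ)*(r^γ - r^2)) x < 0 := by
    intro x hx
    rw [interior_Icc] at hx
    have hx0 : 0 < x := lt_trans hr0 hx.1
    rw [(phi_deriv γ hx0).deriv, phi_deriv_eq γ hx0]
    have hη := eta_neg hγ0 hγ1 hx0 hx.2
    have hpos : (0:ℝ) < (2+γ)*x^(γ-1) := by
      have := Real.rpow_pos_of_pos hx0 (γ-1)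
      nlinarith
    nlinarith
  have hmono := strictAntiOn_of_deriv_neg (convex_Icc r 1) hcont hd
  have hlt := hmono (show r ∈ Icc r 1 from ⟨le_refl _, hr1.le⟩)
    (show (1:ℝ) ∈ Icc r 1 from ⟨hr1.le, le_refl _⟩) hr1
  simp only [Real.one_rpow, one_pow] at hlt
  linarith

lemma phi_neg {γ : ℝ} (hγ0 : γ < 0) (hγm : -1 < γ) {r : ℝ} (hr0 : 0 < r) (hr1 : r < 1) :
    (2-γ)*(1-r^(2+γ)) - (2+γ)*(r^γ - r^2) < 0 := by
  have hcont : ContinuousOn (fun r : ℝ => (2-γ)*(1-r^(2+γ)) - (2+γ)*(r^γ - r^2)) (Icc r 1) := by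
    apply ContinuousOn.sub
    · exact continuousOn_const.mul (continuousOn_const.sub (continuousOn_id.rpow_const
        (fun x hx => Or.inl (ne_of_gt (lt_of_lt_of_le hr0 hx.1)))))
    · exact continuousOn_const.mul ((continuousOn_id.rpow_const
        (fun x hx => Or.inl (ne_of_gt (lt_of_lt_of_le hr0 hx.1)))).sub (continuousOn_id.pow 2))
  have hd : ∀ x ∈ interior (Icc r 1),
      0 < deriv (fun r : ℝ => (2-γ)*(1-r^(2+γ)) - (2+γ)*(r^γ - r^2)) x := by
    intro x hx
    rw [interior_Icc] at hx
    have hx0 : 0 < x := lt_trans hr0 hx.1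
    rw [(phi_deriv γ hx0).deriv, phi_deriv_eq γ hx0]
    have hη := eta_pos hγ0 hγm hx0 hx.2
    have hpos : (0:ℝ) < (2+γ)*x^(γ-1) := by
      have := Real.rpow_pos_of_pos hx0 (γ-1)
      nlinarith
    nlinarith
  have hmono := strictMonoOn_of_deriv_pos (convex_Icc r 1) hcont hd
  have hlt := hmono (show r ∈ Icc r 1 from ⟨le_refl _, hr1.le⟩)
    (show (1:ℝ) ∈ Icc r 1 from ⟨hr1.le, le_refl _⟩) hr1
  simp only [Real.one_rpow, one_pow] at hlt
  linarith

lemma part6 {γ : ℝ} (hγm : -1 < γ) (hγ1 : γ < 1) (hγ0 : γ ≠ 0) {t : ℝ} (ht : 0 < t)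
    (ht1 : t ≠ 1) : 0 < F1d γ t := by
  have hu : (0:ℝ) < 1 + t := by linarith
  have hv : (0:ℝ) < |1-t| := abs_pos.mpr (by intro h; apply ht1; linarith [sub_eq_zero.mp h])
  have hvu : |1-t| < 1 + t := abs_lt.mpr ⟨by linarith, by linarith⟩
  set r := |1-t| / (1+t) with hr
  have hr0 : 0 < r := div_pos hv hu
  have hr1 : r < 1 := (div_lt_one hu).mpr hvu
  have hrγ : r^γ = |1-t|^γ/(1+t)^γ := Real.div_rpow hv.le hu.le γ
  have hr2 : r^2 = |1-t|^2/(1+t)^2 := div_pow _ _ 2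
  have hr2γ : r^(2+γ) = |1-t|^(2+γ)/(1+t)^(2+γ) := Real.div_rpow hv.le hu.le _
  have hu2γ : (1+t)^((2:ℝ)+γ) = (1+t)^2*(1+t)^γ := by
    rw [Real.rpow_add hu, Real.rpow_two]
  have hv2γ : |1-t|^((2:ℝ)+γ) = |1-t|^2*|1-t|^γ := by
    rw [Real.rpow_add hv, Real.rpow_two]
  have hv2 : |1-t|^2 = (1-t)^2 := sq_abs _
  have hUpos : (0:ℝ) < (1+t)^γ := Real.rpow_pos_of_pos hu γ
  have hVpos : (0:ℝ) < |1-t|^γ := Real.rpow_pos_of_pos hv γ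
  have h2γ : (0:ℝ) < 2 + γ := by linarith
  have key : F1d γ t = (1+t)^((2:ℝ)+γ) * ((2-γ)*(1-r^(2+γ)) - (2+γ)*(r^γ - r^2)) /
      (4*(γ*(2+γ))*t^2) := by
    rw [F1d, hr2γ, hrγ, hr2, hu2γ, hv2γ, hv2]
    field_simp
    ring
  rw [key]
  rcases lt_or_gt_of_ne hγ0 with hneg|hpos
  · have hφ := phi_neg hneg hγm hr0 hr1
    have hnum : (1+t)^((2:ℝ)+γ) * ((2-γ)*(1-r^(2+γ)) - (2+γ)*(r^γ - r^2)) < 0 :=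
      mul_neg_of_pos_of_neg (Real.rpow_pos_of_pos hu _) hφ
    have hden : 4*(γ*(2+γ))*t^2 < 0 := by nlinarith [mul_neg_of_neg_of_pos (mul_neg_of_neg_of_pos hneg h2γ) (pow_pos ht 2)]
    exact div_pos_of_neg_of_neg hnum hden
  · have hφ := phi_pos hpos hγ1 hr0 hr1
    have hnum : 0 < (1+t)^((2:ℝ)+γ) * ((2-γ)*(1-r^(2+γ)) - (2+γ)*(r^γ - r^2)) :=
      mul_pos (Real.rpow_pos_of_pos hu _) hφ
    have hden : 0 < 4*(γ*(2+γ))*t^2 := by positivity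
    exact div_pos hnum hden

/-- Properties of the auxiliary function `F_{1,γ}` for `γ ∈ (-1,0) ∪ (0,1)`:
(i) the derivative formula, (ii) the symmetry `F'(1/t) = t^{2-γ} F'(t)`,
(iii) vanishing limits at `0+`, (iv) the limit `2/(1+γ)` at `+∞`,
(v) `F'(t)/t → 2(2-γ)/3` as `t → 0+`, (vi) strict positivity of `F'` on `(0,∞)`. -/
theorem F1_properties (γ : ℝ) (hγ : γ ∈ Ioo (-1:ℝ) 1) (hγ0 : γ ≠ 0) :
    (∀ t : ℝ, 0 < t → t ≠ 1 → HasDerivAt (F1 γ) (F1d γ t) t) ∧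
    (∀ t : ℝ, 0 < t → t ≠ 1 → F1d γ (1/t) = t ^ (2 - γ) * F1d γ t) ∧
    (Tendsto (F1 γ) (nhdsWithin 0 (Ioi 0)) (nhds 0) ∧
      Tendsto (F1d γ) (nhdsWithin 0 (Ioi 0)) (nhds 0)) ∧
    Tendsto (F1 γ) atTop (nhds (2/(1+γ))) ∧
    Tendsto (fun t => F1d γ t / t) (nhdsWithin 0 (Ioi 0)) (nhds (2*(2-γ)/3)) ∧
    (∀ t : ℝ, 0 < t → t ≠ 1 → 0 < F1d γ t) := by
  obtain ⟨hγm, hγ1⟩ := hγ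
  exact ⟨fun t ht ht1 => part1 hγm hγ1 hγ0 ht ht1,
    fun t ht ht1 => part2 hγ0 (by linarith) ht,
    ⟨part3a hγm hγ0, part3b hγm hγ1 hγ0⟩,
    part4 hγm hγ1 hγ0,
    part5 hγm hγ1 hγ0,
    fun t ht ht1 => part6 hγm hγ1 hγ0 ht ht1⟩

end GSQGaux
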